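/- For the Kodaira model, the first Chern–Ricci form vanishes: with A¹ the Gauduchon operator at t = 1 and Ω¹(X,Y) := −[A¹(X),A¹(Y)] − A¹(μ(X,Y)) the Chern curvature, one has ρ^{1,(1)}(X, Y) := −(1/4) tr(I ∘ Ω¹(X, Y) + I ∘ Ω¹(IX, IY)) = 0 for all X, Y ∈ ℝ⁴. -/
import Mathlib


open scoped RealInnerProductSpace

/-- The standard basis of `ℝ⁴`. -/
noncomputable def e4 (i : Fin 4) : EuclideanSpace ℝ (Fin 4) :=
  EuclideanSpace.single i 1

set_option maxHeartbeats 8000000 in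
/-- For the Kodaira model, the first Chern–Ricci form vanishes: with
`A¹` the Gauduchon operator at `t = 1` and `Ω¹(X,Y) = −[A¹(X),A¹(Y)] − A¹(μ(X,Y))`
the Chern curvature, one has
`ρ^{1,(1)}(X, Y) = −(1/4) tr(I ∘ Ω¹(X, Y) + I ∘ Ω¹(IX, IY)) = 0` for all `X, Y`. -/
theorem stmt_16 (r v α β : ℝ) (hr : 0 < r) (hv : 0 < v)
    (μ : EuclideanSpace ℝ (Fin 4) →ₗ[ℝ]
      EuclideanSpace ℝ (Fin 4) →ₗ[ℝ] EuclideanSpace ℝ (Fin 4))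
    (hμalt : ∀ X, μ X X = 0)
    (h01 : μ (e4 0) (e4 1) =
      (α / r) • e4 0 - (β / r) • e4 1 - (v / r ^ 2) • e4 3)
    (h02 : μ (e4 0) (e4 2) =
      -(α ^ 2 / v) • e4 0 + (α * β / v) • e4 1 + (α / r) • e4 3)
    (h03 : μ (e4 0) (e4 3) =
      -(α * β / v) • e4 0 + (β ^ 2 / v) • e4 1 + (β / r) • e4 3)
    (h12 : μ (e4 1) (e4 2) =
      (α * β / v) • e4 0 - (β ^ 2 / v) • e4 1 - (β / r) • e4 3)
    (h13 : μ (e4 1) (e4 3) =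
      -(α ^ 2 / v) • e4 0 + (α * β / v) • e4 1 + (α / r) • e4 3)
    (h23 : μ (e4 2) (e4 3) =
      ((α ^ 2 + β ^ 2) * α * r / v ^ 2) • e4 0
        - ((α ^ 2 + β ^ 2) * β * r / v ^ 2) • e4 1
        - ((α ^ 2 + β ^ 2) / v) • e4 3)
    (I : EuclideanSpace ℝ (Fin 4) →ₗ[ℝ] EuclideanSpace ℝ (Fin 4))
    (hI0 : I (e4 0) = e4 1) (hI1 : I (e4 1) = -e4 0)
    (hI2 : I (e4 2) = e4 3) (hI3 : I (e4 3) = -e4 2)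
    -- the Levi-Civita operator `S^μ`
    (S : EuclideanSpace ℝ (Fin 4) →
      (EuclideanSpace ℝ (Fin 4) →ₗ[ℝ] EuclideanSpace ℝ (Fin 4)))
    (hS : ∀ X Y Z, ⟪S X Y, Z⟫ =
      -(1 / 2) * ⟪μ X Y, Z⟫ - (1 / 2) * ⟪μ Z X, Y⟫ - (1 / 2) * ⟪μ Z Y, X⟫)
    -- the `3`-form `F^μ`
    (F : EuclideanSpace ℝ (Fin 4) → EuclideanSpace ℝ (Fin 4) →
      EuclideanSpace ℝ (Fin 4) → ℝ)
    (hF : ∀ X Y Z, F X Y Z =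
      -⟪μ (I X) (I Y), Z⟫ - ⟪μ (I Y) (I Z), X⟫ - ⟪μ (I Z) (I X), Y⟫)
    -- the Gauduchon operator `A^t` (integrable case)
    (A : ℝ → EuclideanSpace ℝ (Fin 4) →
      (EuclideanSpace ℝ (Fin 4) →ₗ[ℝ] EuclideanSpace ℝ (Fin 4)))
    (hA : ∀ (t : ℝ) (X Y Z : EuclideanSpace ℝ (Fin 4)),
      ⟪A t X Y, Z⟫ = ⟪S X Y, Z⟫ + ((t + 1) / 4) * F X (I Y) (I Z)
        + ((t - 1) / 4) * F X Y Z) :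
    let Ω : ℝ → EuclideanSpace ℝ (Fin 4) → EuclideanSpace ℝ (Fin 4) →
        (EuclideanSpace ℝ (Fin 4) →ₗ[ℝ] EuclideanSpace ℝ (Fin 4)) :=
      fun t X Y => -((A t X) ∘ₗ (A t Y) - (A t Y) ∘ₗ (A t X)) - A t (μ X Y)
    ∀ X Y : EuclideanSpace ℝ (Fin 4),
      -(1 / 4) * LinearMap.trace ℝ (EuclideanSpace ℝ (Fin 4))
        (I ∘ₗ Ω 1 X Y + I ∘ₗ Ω 1 (I X) (I Y)) = 0 := by
  intro Ω X Y
  have hr' : r ≠ 0 := hr.ne'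
  have hv' : v ≠ 0 := hv.ne'
  have hip : ∀ x y : EuclideanSpace ℝ (Fin 4),
      ⟪x, y⟫ = x 0 * y 0 + x 1 * y 1 + x 2 * y 2 + x 3 * y 3 := by
    intro x y
    simp [PiLp.inner_apply, Fin.sum_univ_four, RCLike.inner_apply, mul_comm]
  have hbasis : ∀ w : EuclideanSpace ℝ (Fin 4),
      w = w 0 • e4 0 + w 1 • e4 1 + w 2 • e4 2 + w 3 • e4 3 := by
    intro w; ext k
    fin_cases k <;> simp [e4, EuclideanSpace.single_apply]
  have hanti : ∀ u w, μ u w = -μ w u := by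
    intro u w
    have h := hμalt (u + w)
    simp only [map_add, LinearMap.add_apply, hμalt, zero_add, add_zero] at h
    rw [add_comm] at h
    exact eq_neg_of_add_eq_zero_left h
  have h10 := hanti (e4 1) (e4 0); rw [h01] at h10
  have h20 := hanti (e4 2) (e4 0); rw [h02] at h20
  have h30 := hanti (e4 3) (e4 0); rw [h03] at h30
  have h21 := hanti (e4 2) (e4 1); rw [h12] at h21
  have h31 := hanti (e4 3) (e4 1); rw [h13] at h31
  have h32 := hanti (e4 3) (e4 2); rw [h23] at h32
  have hμf : ∀ u w : EuclideanSpace ℝ (Fin 4), μ u w =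
      ((-1)*α*w 0*u 1/(r) + (1)*α*u 0*w 1/(r) + (1)*α*β*w 0*u 3/(v) + (-1)*α*β*w 1*u 2/(v) + (1)*α*β*u 1*w 2/(v) + (-1)*α*β*u 0*w 3/(v) + (-1)*α*β^2*r*w 2*u 3/(v^2) + (1)*α*β^2*r*u 2*w 3/(v^2) + (1)*α^2*w 1*u 3/(v) + (1)*α^2*w 0*u 2/(v) + (-1)*α^2*u 1*w 3/(v) + (-1)*α^2*u 0*w 2/(v) + (-1)*α^3*r*w 2*u 3/(v^2) + (1)*α^3*r*u 2*w 3/(v^2)) • e4 0 + ((1)*β*w 0*u 1/(r) + (-1)*β*u 0*w 1/(r) + (-1)*β^2*w 0*u 3/(v) + (1)*β^2*w 1*u 2/(v) + (-1)*β^2*u 1*w 2/(v) + (1)*β^2*u 0*w 3/(v) + (1)*β^3*r*w 2*u 3/(v^2) + (-1)*β^3*r*u 2*w 3/(v^2) + (-1)*α*β*w 1*u 3/(v) + (-1)*α*β*w 0*u 2/(v) + (1)*α*β*u 1*w 3/(v) + (1)*α*β*u 0*w 2/(v) + (1)*α^2*β*r*w 2*u 3/(v^2) + (-1)*α^2*β*r*u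 2*w 3/(v^2)) • e4 1 + ((1)*v*w 0*u 1/(r^2) + (-1)*v*u 0*w 1/(r^2) + (-1)*β*w 0*u 3/(r) + (1)*β*w 1*u 2/(r) + (-1)*β*u 1*w 2/(r) + (1)*β*u 0*w 3/(r) + (1)*β^2*w 2*u 3/(v) + (-1)*β^2*u 2*w 3/(v) + (-1)*α*w 1*u 3/(r) + (-1)*α*w 0*u 2/(r) + (1)*α*u 1*w 3/(r) + (1)*α*u 0*w 2/(r) + (1)*α^2*w 2*u 3/(v) + (-1)*α^2*u 2*w 3/(v)) • e4 3 := by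
    intro u w
    conv_lhs => rw [hbasis u, hbasis w]
    simp only [map_add, map_smul, LinearMap.add_apply, LinearMap.smul_apply,
      hμalt, h01, h02, h03, h12, h13, h23, h10, h20, h21, h30, h31, h32,
      smul_zero, zero_add, add_zero]
    module
  have hμ0 : ∀ u w : EuclideanSpace ℝ (Fin 4), μ u w 0 = (-1)*α*w 0*u 1/(r) + (1)*α*u 0*w 1/(r) + (1)*α*β*w 0*u 3/(v) + (-1)*α*β*w 1*u 2/(v) + (1)*α*β*u 1*w 2/(v) + (-1)*α*β*u 0*w 3/(v) + (-1)*α*β^2*r*w 2*u 3/(v^2) + (1)*α*β^2*r*u 2*w 3/(v^2) + (1)*α^2*w 1*u 3/(v) + (1)*α^2*w 0*u 2/(v) + (-1)*α^2*u 1*w 3/(v) + (-1)*α^2*u 0*w 2/(v) + (-1)*α^3*r*w 2*u 3/(v^2) + (1)*α^3*r*u 2*w 3/(v^2) := by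
    intro u w; rw [hμf]; simp [e4, EuclideanSpace.single_apply]
  have hμ1 : ∀ u w : EuclideanSpace ℝ (Fin 4), μ u w 1 = (1)*β*w 0*u 1/(r) + (-1)*β*u 0*w 1/(r) + (-1)*β^2*w 0*u 3/(v) + (1)*β^2*w 1*u 2/(v) + (-1)*β^2*u 1*w 2/(v) + (1)*β^2*u 0*w 3/(v) + (1)*β^3*r*w 2*u 3/(v^2) + (-1)*β^3*r*u 2*w 3/(v^2) + (-1)*α*β*w 1*u 3/(v) + (-1)*α*β*w 0*u 2/(v) + (1)*α*β*u 1*w 3/(v) + (1)*α*β*u 0*w 2/(v) + (1)*α^2*β*r*w 2*u 3/(v^2) + (-1)*α^2*β*r*u 2*w 3/(v^2) := by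
    intro u w; rw [hμf]; simp [e4, EuclideanSpace.single_apply]
  have hμ2 : ∀ u w : EuclideanSpace ℝ (Fin 4), μ u w 2 = 0 := by
    intro u w; rw [hμf]; simp [e4, EuclideanSpace.single_apply]
  have hμ3 : ∀ u w : EuclideanSpace ℝ (Fin 4), μ u w 3 = (1)*v*w 0*u 1/(r^2) + (-1)*v*u 0*w 1/(r^2) + (-1)*β*w 0*u 3/(r) + (1)*β*w 1*u 2/(r) + (-1)*β*u 1*w 2/(r) + (1)*β*u 0*w 3/(r) + (1)*β^2*w 2*u 3/(v) + (-1)*β^2*u 2*w 3/(v) + (-1)*α*w 1*u 3/(r) + (-1)*α*w 0*u 2/(r) + (1)*α*u 1*w 3/(r) + (1)*α*u 0*w 2/(r) + (1)*α^2*w 2*u 3/(v) + (-1)*α^2*u 2*w 3/(v) := by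
    intro u w; rw [hμf]; simp [e4, EuclideanSpace.single_apply]
  have hIf : ∀ w : EuclideanSpace ℝ (Fin 4),
      I w = (-w 1) • e4 0 + (w 0) • e4 1 + (-w 3) • e4 2 + (w 2) • e4 3 := by
    intro w
    conv_lhs => rw [hbasis w]
    simp only [map_add, map_smul, hI0, hI1, hI2, hI3]
    module
  have hIc0 : ∀ w : EuclideanSpace ℝ (Fin 4), I w 0 = -w 1 := by
    intro w; rw [hIf]; simp [e4, EuclideanSpace.single_apply]
  have hIc1 : ∀ w : EuclideanSpace ℝ (Fin 4), I w 1 = w 0 := by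
    intro w; rw [hIf]; simp [e4, EuclideanSpace.single_apply]
  have hIc2 : ∀ w : EuclideanSpace ℝ (Fin 4), I w 2 = -w 3 := by
    intro w; rw [hIf]; simp [e4, EuclideanSpace.single_apply]
  have hIc3 : ∀ w : EuclideanSpace ℝ (Fin 4), I w 3 = w 2 := by
    intro w; rw [hIf]; simp [e4, EuclideanSpace.single_apply]
  have hII : ∀ w : EuclideanSpace ℝ (Fin 4), I (I w) = -w := by
    intro w
    conv_lhs => rw [hbasis w]
    simp only [map_add, map_smul, hI0, hI1, hI2, hI3, map_neg]
    conv_rhs => rw [hbasis w]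
    module
  have hcoord : ∀ (w : EuclideanSpace ℝ (Fin 4)) (k : Fin 4), ⟪w, e4 k⟫ = w k := by
    intro w k; rw [hip]; fin_cases k <;> simp [e4, EuclideanSpace.single_apply]
  have hA0 : ∀ x w : EuclideanSpace ℝ (Fin 4), A 1 x w 0 = (1/2)*v*x 1*w 3/(r^2) + (-1/2)*v*x 0*w 2/(r^2) + (-1/2)*β*x 3*w 3/(r) + (1/2)*β*x 2*w 2/(r) + (1)*β*x 1*w 1/(r) + (-1)*β^2*w 1*x 3/(v) + (-1/2)*β^2*x 1*w 3/(v) + (-1/2)*β^2*x 0*w 2/(v) + (1/2)*β^3*r*x 3*w 3/(v^2) + (1/2)*β^3*r*x 2*w 2/(v^2) + (-1/2)*α*w 2*x 3/(r) + (-1/2)*α*x 2*w 3/(r) + (-1)*α*x 0*w 1/(r) + (-1)*α*β*x 1*w 2/(v) + (1)*α*β*x 0*w 3/(v) + (1/2)*α*β^2*r*w 2*x 3/(v^2) + (-1/2)*α*β^2*r*x 2*w 3/(v^2) + (-1)*α^2*w 1*x 3/(v) + (1/2)*α^2*x 1*w 3/(v) + (1/2)*α^2*x 0*w 2/(v) +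 (1/2)*α^2*β*r*x 3*w 3/(v^2) + (1/2)*α^2*β*r*x 2*w 2/(v^2) + (1/2)*α^3*r*w 2*x 3/(v^2) + (-1/2)*α^3*r*x 2*w 3/(v^2) := by
    intro x w
    have h := hA 1 x w (e4 0)
    rw [hS, hF, hF] at h
    simp only [hII, hI0, hI1, hI2, hI3, map_neg, LinearMap.neg_apply, neg_neg,
      inner_neg_left, inner_neg_right, hcoord] at h
    rw [h]
    simp (config := { maxSteps := 100000000 }) [hip, hμ0, hμ1, hμ2, hμ3,
      hIc0, hIc1, hIc2, hIc3, e4, EuclideanSpace.single_apply]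
    ring
  have hA1 : ∀ x w : EuclideanSpace ℝ (Fin 4), A 1 x w 1 = (-1/2)*v*x 1*w 2/(r^2) + (-1/2)*v*x 0*w 3/(r^2) + (1/2)*β*w 2*x 3/(r) + (1/2)*β*x 2*w 3/(r) + (-1)*β*w 0*x 1/(r) + (1)*β^2*w 0*x 3/(v) + (1/2)*β^2*x 1*w 2/(v) + (-1/2)*β^2*x 0*w 3/(v) + (-1/2)*β^3*r*w 2*x 3/(v^2) + (1/2)*β^3*r*x 2*w 3/(v^2) + (-1/2)*α*x 3*w 3/(r) + (1/2)*α*x 2*w 2/(r) + (1)*α*x 0*w 0/(r) + (-1)*α*β*x 1*w 3/(v) + (-1)*α*β*x 0*w 2/(v) + (1/2)*α*β^2*r*x 3*w 3/(v^2) + (1/2)*α*β^2*r*x 2*w 2/(v^2) + (1)*α^2*w 0*x 3/(v) + (-1/2)*α^2*x 1*w 2/(v) + (1/2)*α^2*x 0*w 3/(v) + (-1/2)*α^2*β*r*w 2*x 3/(v^2) + (1/2)*α^2*β*r*x 2*w 3/(v^2) + (1/2)*α^3*r*x 3*w 3/(v^2) + (1/2)*α^3*r*x 2*w 2/(v^2)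 := by
    intro x w
    have h := hA 1 x w (e4 1)
    rw [hS, hF, hF] at h
    simp only [hII, hI0, hI1, hI2, hI3, map_neg, LinearMap.neg_apply, neg_neg,
      inner_neg_left, inner_neg_right, hcoord] at h
    rw [h]
    simp (config := { maxSteps := 100000000 }) [hip, hμ0, hμ1, hμ2, hμ3,
      hIc0, hIc1, hIc2, hIc3, e4, EuclideanSpace.single_apply]
    ring
  have hA2 : ∀ x w : EuclideanSpace ℝ (Fin 4), A 1 x w 2 = (1/2)*v*x 1*w 1/(r^2) + (1/2)*v*x 0*w 0/(r^2) + (-1/2)*β*w 1*x 3/(r) + (-1/2)*β*w 0*x 2/(r) + (-1)*β*x 1*w 3/(r) + (1)*β^2*x 3*w 3/(v) + (-1/2)*β^2*x 1*w 1/(v) + (1/2)*β^2*x 0*w 0/(v) + (1/2)*β^3*r*w 1*x 3/(v^2) + (-1/2)*β^3*r*w 0*x 2/(v^2) + (1/2)*α*w 0*x 3/(r) + (-1/2)*α*w 1*x 2/(r) + (1)*α*x 0*w 3/(r) + (1)*α*β*w 0*x 1/(v) + (1)*α*β*x 0*w 1/(v) + (-1/2)*α*β^2*r*w 0*x 3/(v^2)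 + (-1/2)*α*β^2*r*w 1*x 2/(v^2) + (1)*α^2*x 3*w 3/(v) + (1/2)*α^2*x 1*w 1/(v) + (-1/2)*α^2*x 0*w 0/(v) + (1/2)*α^2*β*r*w 1*x 3/(v^2) + (-1/2)*α^2*β*r*w 0*x 2/(v^2) + (-1/2)*α^3*r*w 0*x 3/(v^2) + (-1/2)*α^3*r*w 1*x 2/(v^2) := by
    intro x w
    have h := hA 1 x w (e4 2)
    rw [hS, hF, hF] at h
    simp only [hII, hI0, hI1, hI2, hI3, map_neg, LinearMap.neg_apply, neg_neg,
      inner_neg_left, inner_neg_right, hcoord] at h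
    rw [h]
    simp (config := { maxSteps := 100000000 }) [hip, hμ0, hμ1, hμ2, hμ3,
      hIc0, hIc1, hIc2, hIc3, e4, EuclideanSpace.single_apply]
    ring
  have hA3 : ∀ x w : EuclideanSpace ℝ (Fin 4), A 1 x w 3 = (-1/2)*v*w 0*x 1/(r^2) + (1/2)*v*x 0*w 1/(r^2) + (1/2)*β*w 0*x 3/(r) + (-1/2)*β*w 1*x 2/(r) + (1)*β*x 1*w 2/(r) + (-1)*β^2*w 2*x 3/(v) + (1/2)*β^2*w 0*x 1/(v) + (1/2)*β^2*x 0*w 1/(v) + (-1/2)*β^3*r*w 0*x 3/(v^2) + (-1/2)*β^3*r*w 1*x 2/(v^2) + (1/2)*α*w 1*x 3/(r) + (1/2)*α*w 0*x 2/(r) + (-1)*α*x 0*w 2/(r) + (1)*α*β*x 1*w 1/(v) + (-1)*α*β*x 0*w 0/(v) + (-1/2)*α*β^2*r*w 1*x 3/(v^2) + (1/2)*α*β^2*r*w 0*x 2/(v^2) + (-1)*α^2*w 2*x 3/(v) + (-1/2)*α^2*w 0*x 1/(v) + (-1/2)*α^2*x 0*w 1/(v) + (-1/2)*α^2*β*r*w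 0*x 3/(v^2) + (-1/2)*α^2*β*r*w 1*x 2/(v^2) + (-1/2)*α^3*r*w 1*x 3/(v^2) + (1/2)*α^3*r*w 0*x 2/(v^2) := by
    intro x w
    have h := hA 1 x w (e4 3)
    rw [hS, hF, hF] at h
    simp only [hII, hI0, hI1, hI2, hI3, map_neg, LinearMap.neg_apply, neg_neg,
      inner_neg_left, inner_neg_right, hcoord] at h
    rw [h]
    simp (config := { maxSteps := 100000000 }) [hip, hμ0, hμ1, hμ2, hμ3,
      hIc0, hIc1, hIc2, hIc3, e4, EuclideanSpace.single_apply]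
    ring
  have htr : ∀ L : EuclideanSpace ℝ (Fin 4) →ₗ[ℝ] EuclideanSpace ℝ (Fin 4),
      LinearMap.trace ℝ _ L = L (e4 0) 0 + L (e4 1) 1 + L (e4 2) 2 + L (e4 3) 3 := by
    intro L
    rw [LinearMap.trace_eq_matrix_trace ℝ (EuclideanSpace.basisFun (Fin 4) ℝ).toBasis]
    simp [Matrix.trace, Matrix.diag, LinearMap.toMatrix_apply, Fin.sum_univ_four, e4]
  have hΩtr : ∀ P Q : EuclideanSpace ℝ (Fin 4),
      LinearMap.trace ℝ (EuclideanSpace ℝ (Fin 4)) (I ∘ₗ Ω 1 P Q) = 0 := by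
    intro P Q
    rw [htr]
    simp only [Ω, LinearMap.comp_apply, LinearMap.sub_apply, LinearMap.neg_apply,
      map_sub, map_neg, PiLp.sub_apply, PiLp.neg_apply,
      hIc0, hIc1, hIc2, hIc3]
    simp (config := { maxSteps := 100000000 }) [hA0, hA1, hA2, hA3,
      hμ0, hμ1, hμ2, hμ3, hIc0, hIc1, hIc2, hIc3, e4, EuclideanSpace.single_apply]
    field_simp
    ring
  rw [map_add, hΩtr, hΩtr]
  norm_num
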